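/- arXiv:1208.2573 — 2 statements merged into one kernel-verified Lean document; each statement's English description precedes it below -/
import Mathlib

section
/- Let 0 < a < b and 0 < s < 1. Then |L_s^s(a,b) − A(a,b)^s| ≤ ((b−a)² s(1−s)/(8(s+1)(s+2)(s+3)))[a^{s−2} + (s²+3s+2) A(a,b)^{s−2} + b^{s−2}], and |L_s^s(a,b) − A(((3a+b)/4)^s, ((a+3b)/4)^s)| ≤ ((b−a)² s(1−s)/(8(s+1)(s+2)(s+3)))[2(a^{s−2} + b^{s−2}) + (3s²+5s+6)(((3a+b)/4)^{s−2} + ((a+3b)/4)^{s−2})]. (Here s(1−s) = |s(s−1)| is the absolute value of the second derivative coefficient of x ↦ x^s.) -/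
open MeasureTheory intervalIntegral Set

lemma convexOn_rpow_nonpos {p : ℝ} (hp : p ≤ 0) :
    ConvexOn ℝ (Set.Ioi (0:ℝ)) (fun x : ℝ => x ^ p) := by
  have hIoi : interior (Set.Ioi (0:ℝ)) = Set.Ioi 0 := interior_Ioi
  refine convexOn_of_hasDerivWithinAt2_nonneg (convex_Ioi 0)
    (f' := fun x => p * x ^ (p - 1)) (f'' := fun x => p * ((p-1) * x ^ (p - 2))) ?_ ?_ ?_ ?_
  · exact fun x hx => ((Real.continuousAt_rpow_const x p (Or.inl (ne_of_gt hx))).continuousWithinAt)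
  · intro x hx
    rw [hIoi] at hx ⊢
    exact (Real.hasDerivAt_rpow_const (Or.inl (ne_of_gt hx))).hasDerivWithinAt
  · intro x hx
    rw [hIoi] at hx ⊢
    have h := ((Real.hasDerivAt_rpow_const (p := p - 1) (Or.inl (ne_of_gt hx))).const_mul p)
    have : p - 1 - 1 = p - 2 := by ring
    rw [this] at h
    exact h.hasDerivWithinAt
  · intro x hx
    rw [hIoi] at hx
    have hxp : (0:ℝ) ≤ x ^ (p - 2) := (Real.rpow_pos_of_pos hx _).le
    have hpp : (0:ℝ) ≤ p * (p - 1) := by nlinarith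
    show (0:ℝ) ≤ p * ((p-1) * x ^ (p - 2))
    calc (0:ℝ) ≤ p * (p-1) * x ^ (p - 2) := mul_nonneg hpp hxp
      _ = p * ((p-1) * x ^ (p - 2)) := by ring

lemma interp_rpow {p u v t : ℝ} (hp : p ≤ 0) (hu : 0 < u) (huv : u < v)
    (ht : t ∈ Set.Icc u v) :
    (v - u) * t ^ p ≤ (v - t) * u ^ p + (t - u) * v ^ p := by
  obtain ⟨ht1, ht2⟩ := ht
  have h := (convexOn_rpow_nonpos hp).2 (Set.mem_Ioi.2 hu) (Set.mem_Ioi.2 (hu.trans huv))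
    (show (0:ℝ) ≤ (v - t)/(v - u) from div_nonneg (by linarith) (by linarith))
    (show (0:ℝ) ≤ (t - u)/(v - u) from div_nonneg (by linarith) (by linarith))
    (show (v - t)/(v - u) + (t - u)/(v - u) = 1 by
      rw [← add_div, div_eq_one_iff_eq (by linarith : v - u ≠ 0)]; ring)
  simp only [smul_eq_mul] at h
  have hc : (v - t)/(v - u) * u + (t - u)/(v - u) * v = t := by
    rw [div_mul_eq_mul_div, div_mul_eq_mul_div, ← add_div,
      div_eq_iff (by linarith : v - u ≠ 0)]
    ring
  rw [hc] at h
  have hvu : 0 < v - u := by linarith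
  calc (v - u) * t ^ p ≤ (v - u) * ((v - t)/(v - u) * u ^ p + (t - u)/(v - u) * v ^ p) := by
        exact mul_le_mul_of_nonneg_left h hvu.le
    _ = (v - t) * u ^ p + (t - u) * v ^ p := by field_simp; try ring

lemma ii_rpow (p : ℝ) {c x : ℝ} (hc : 0 < c) (hx : 0 < x) :
    IntervalIntegrable (fun t : ℝ => t ^ p) volume c x := by
  apply ContinuousOn.intervalIntegrable
  intro t ht
  exact (Real.continuousAt_rpow_const t p
    (Or.inl (ne_of_gt (lt_of_lt_of_le (lt_min hc hx) ht.1)))).continuousWithinAt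

lemma taylor_id (s : ℝ) (hs0 : 0 < s) (hs1 : s < 1) {c x : ℝ} (hc : 0 < c) (hx : 0 < x) :
    ∫ t in c..x, (x - t) * (s * (s - 1) * t ^ (s - 2))
      = x ^ s - c ^ s - s * c ^ (s - 1) * (x - c) := by
  have h0 : (0:ℝ) ∉ Set.uIcc c x := notMem_uIcc_of_lt hc hx
  have hcongr : ∀ t ∈ Set.uIcc c x,
      (x - t) * (s * (s - 1) * t ^ (s - 2))
        = s * (s - 1) * x * t ^ (s - 2) - s * (s - 1) * t ^ (s - 1) := by
    intro t ht
    have ht0 : (0:ℝ) < t := lt_of_lt_of_le (lt_min hc hx) ht.1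
    have : t ^ (s - 1) = t ^ (s - 2) * t := by
      rw [show s - 1 = s - 2 + 1 by ring, Real.rpow_add_one (ne_of_gt ht0)]
    rw [this]; ring
  rw [intervalIntegral.integral_congr hcongr]
  have hint1 : IntervalIntegrable (fun t : ℝ => s * (s - 1) * x * t ^ (s - 2)) volume c x :=
    (ii_rpow (s - 2) hc hx).const_mul _
  have hint2 : IntervalIntegrable (fun t : ℝ => s * (s - 1) * t ^ (s - 1)) volume c x :=
    (ii_rpow (s - 1) hc hx).const_mul _
  rw [intervalIntegral.integral_sub hint1 hint2,
    intervalIntegral.integral_const_mul, intervalIntegral.integral_const_mul]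
  have I1 : ∫ t in c..x, t ^ (s - 2) = (x ^ (s - 1) - c ^ (s - 1)) / (s - 1) := by
    rw [integral_rpow (Or.inr ⟨by intro h; rw [sub_eq_iff_eq_add] at h; norm_num at h; linarith, h0⟩)]
    have e : s - 2 + 1 = s - 1 := by ring
    rw [e]
  have I2 : ∫ t in c..x, t ^ (s - 1) = (x ^ s - c ^ s) / s := by
    rw [integral_rpow (Or.inl (by linarith))]
    have e : s - 1 + 1 = s := by ring
    rw [e]
  rw [I1, I2]
  have ex : x ^ s = x ^ (s - 1) * x := by
    rw [show s = s - 1 + 1 by ring, Real.rpow_add_one (ne_of_gt hx)]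
    rw [show s - 1 + 1 - 1 = s - 1 by ring]
  have ec : c ^ s = c ^ (s - 1) * c := by
    rw [show s = s - 1 + 1 by ring, Real.rpow_add_one (ne_of_gt hc)]
    rw [show s - 1 + 1 - 1 = s - 1 by ring]
  have h1 : s - 1 ≠ 0 := by linarith
  have h2 : s ≠ 0 := ne_of_gt hs0
  have e1 : s * (s - 1) * x * ((x ^ (s - 1) - c ^ (s - 1)) / (s - 1))
      = s * x * (x ^ (s - 1) - c ^ (s - 1)) := by field_simp
  have e2 : s * (s - 1) * ((x ^ s - c ^ s) / s) = (s - 1) * (x ^ s - c ^ s) := by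
    field_simp
  rw [e1, e2]
  linear_combination s * ec - s * ex

lemma m_right (c v : ℝ) (n : ℕ) :
    ∫ x in c..v, (x - c) ^ n = (v - c) ^ (n + 1) / (n + 1) := by
  have hd : ∀ x ∈ Set.uIcc c v,
      HasDerivAt (fun x : ℝ => (x - c) ^ (n + 1) / (n + 1)) ((x - c) ^ n) x := by
    intro x _
    have h := (((hasDerivAt_id x).sub_const c).pow (n + 1)).div_const (n + 1)
    simp only [id_eq, Nat.add_sub_cancel, Nat.cast_add, Nat.cast_one, mul_one] at h
    have hne : (n : ℝ) + 1 ≠ 0 := by positivity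
    convert h using 1
    · rfl
    · rfl
    · rfl
    · field_simp
  rw [intervalIntegral.integral_eq_sub_of_hasDerivAt hd
    (((continuous_id.sub continuous_const).pow n).intervalIntegrable _ _)]
  simp [zero_pow (Nat.succ_ne_zero n)]

lemma m_left (u c : ℝ) (n : ℕ) :
    ∫ x in u..c, (c - x) ^ n = (c - u) ^ (n + 1) / (n + 1) := by
  have hd : ∀ x ∈ Set.uIcc u c,
      HasDerivAt (fun x : ℝ => -((c - x) ^ (n + 1) / (n + 1))) ((c - x) ^ n) x := by
    intro x _
    have h := ((((hasDerivAt_id x).const_sub c).pow (n + 1)).div_const (n + 1)).neg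
    simp only [id_eq, Nat.add_sub_cancel, Nat.cast_add, Nat.cast_one] at h
    have hne : (n : ℝ) + 1 ≠ 0 := by positivity
    convert h using 1
    · rfl
    · rfl
    · rfl
    · field_simp
  rw [intervalIntegral.integral_eq_sub_of_hasDerivAt hd
    (((continuous_const.sub continuous_id).pow n).intervalIntegrable _ _)]
  simp [zero_pow (Nat.succ_ne_zero n)]

lemma contOn_rpow' (p : ℝ) {c x : ℝ} (hc : 0 < c) (hx : 0 < x) :
    ContinuousOn (fun t : ℝ => t ^ p) (Set.uIcc c x) := fun t ht =>
  (Real.continuousAt_rpow_const t p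
    (Or.inl (ne_of_gt (lt_of_lt_of_le (lt_min hc hx) ht.1)))).continuousWithinAt

lemma ptwise_right (s : ℝ) (hs0 : 0 < s) (hs1 : s < 1) {c x : ℝ} (hc : 0 < c) (hcx : c ≤ x) :
    |x ^ s - c ^ s - s * c ^ (s - 1) * (x - c)|
      ≤ s * (1 - s) * ((x - c) ^ 2 * (c ^ (s - 2) / 3 + x ^ (s - 2) / 6)) := by
  rcases eq_or_lt_of_le hcx with rfl | hlt
  · simp
  have hx : 0 < x := hc.trans hlt
  have hxc : (0:ℝ) < x - c := by linarith
  rw [← taylor_id s hs0 hs1 hc hx]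
  refine (intervalIntegral.abs_integral_le_integral_abs hcx).trans ?_
  set C := c ^ (s - 2) with hC
  set X := x ^ (s - 2) with hX
  have hint1 : IntervalIntegrable (fun t : ℝ => |(x - t) * (s * (s - 1) * t ^ (s - 2))|)
      volume c x := by
    apply ContinuousOn.intervalIntegrable
    apply ContinuousOn.abs
    exact ContinuousOn.mul (continuousOn_const.sub continuousOn_id)
      (ContinuousOn.mul continuousOn_const (contOn_rpow' (s - 2) hc hx))
  have hint2 : IntervalIntegrable
      (fun t : ℝ => s * (1 - s) / (x - c) * ((x - t) ^ 2 * C + (x - t) * (t - c) * X))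
      volume c x := by
    exact (by fun_prop : Continuous fun t : ℝ =>
      s * (1 - s) / (x - c) * ((x - t) ^ 2 * C + (x - t) * (t - c) * X)).intervalIntegrable _ _
  have hmono : (∫ t in c..x, |(x - t) * (s * (s - 1) * t ^ (s - 2))|)
      ≤ ∫ t in c..x, s * (1 - s) / (x - c) * ((x - t) ^ 2 * C + (x - t) * (t - c) * X) := by
    apply intervalIntegral.integral_mono_on hcx hint1 hint2
    intro t ht
    have ht0 : 0 < t := lt_of_lt_of_le hc ht.1
    have htp : (0:ℝ) < t ^ (s - 2) := Real.rpow_pos_of_pos ht0 _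
    have habs : |(x - t) * (s * (s - 1) * t ^ (s - 2))|
        = (x - t) * (s * (1 - s) * t ^ (s - 2)) := by
      rw [abs_mul, abs_of_nonneg (by linarith [ht.2] : (0:ℝ) ≤ x - t),
        abs_of_nonpos (by nlinarith [mul_pos (mul_pos hs0
          (by linarith : (0:ℝ) < 1 - s)) htp] : s * (s - 1) * t ^ (s - 2) ≤ 0)]
      ring
    rw [habs]
    have hinterp := interp_rpow (by linarith : s - 2 ≤ 0) hc hlt ht
    have key := mul_le_mul_of_nonneg_left hinterp
      (mul_nonneg (mul_nonneg hs0.le (by linarith : (0:ℝ) ≤ 1 - s))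
        (sub_nonneg.2 ht.2) : (0:ℝ) ≤ s * (1 - s) * (x - t))
    rw [div_mul_eq_mul_div, le_div_iff₀ hxc]
    nlinarith [key]
  refine hmono.trans ?_
  have hrw : (fun t : ℝ => s * (1 - s) / (x - c) * ((x - t) ^ 2 * C + (x - t) * (t - c) * X))
      = fun t : ℝ => s * (1 - s) / (x - c) * (C * (x - t) ^ 2
          + (X * (x - c) * (x - t) ^ 1 - X * (x - t) ^ 2)) := by
    funext t; ring
  rw [hrw, intervalIntegral.integral_const_mul]
  have hii1 : IntervalIntegrable (fun t : ℝ => C * (x - t) ^ 2) volume c x :=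
    (by fun_prop : Continuous fun t : ℝ => C * (x - t) ^ 2).intervalIntegrable _ _
  have hii2 : IntervalIntegrable (fun t : ℝ => X * (x - c) * (x - t) ^ 1) volume c x :=
    (by fun_prop : Continuous fun t : ℝ => X * (x - c) * (x - t) ^ 1).intervalIntegrable _ _
  have hii3 : IntervalIntegrable (fun t : ℝ => X * (x - t) ^ 2) volume c x :=
    (by fun_prop : Continuous fun t : ℝ => X * (x - t) ^ 2).intervalIntegrable _ _
  rw [intervalIntegral.integral_add hii1 (hii2.sub hii3), intervalIntegral.integral_sub hii2 hii3,
    intervalIntegral.integral_const_mul, intervalIntegral.integral_const_mul,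
    intervalIntegral.integral_const_mul, m_left c x 2, m_left c x 1]
  have hCpos : 0 < C := Real.rpow_pos_of_pos hc _
  have hXpos : 0 < X := Real.rpow_pos_of_pos hx _
  have hne : x - c ≠ 0 := ne_of_gt hxc
  apply le_of_eq
  push_cast
  field_simp
  ring

lemma ptwise_left (s : ℝ) (hs0 : 0 < s) (hs1 : s < 1) {c x : ℝ} (hx : 0 < x) (hxc : x ≤ c) :
    |x ^ s - c ^ s - s * c ^ (s - 1) * (x - c)|
      ≤ s * (1 - s) * ((c - x) ^ 2 * (c ^ (s - 2) / 3 + x ^ (s - 2) / 6)) := by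
  rcases eq_or_lt_of_le hxc with rfl | hlt
  · simp
  have hc : 0 < c := hx.trans hlt
  have hcx : (0:ℝ) < c - x := by linarith
  rw [← taylor_id s hs0 hs1 hc hx, intervalIntegral.integral_symm, abs_neg]
  refine (intervalIntegral.abs_integral_le_integral_abs hxc).trans ?_
  set C := c ^ (s - 2) with hC
  set X := x ^ (s - 2) with hX
  have hint1 : IntervalIntegrable (fun t : ℝ => |(x - t) * (s * (s - 1) * t ^ (s - 2))|)
      volume x c := by
    apply ContinuousOn.intervalIntegrable
    apply ContinuousOn.abs
    exact ContinuousOn.mul (continuousOn_const.sub continuousOn_id)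
      (ContinuousOn.mul continuousOn_const (contOn_rpow' (s - 2) hx hc))
  have hint2 : IntervalIntegrable
      (fun t : ℝ => s * (1 - s) / (c - x) * ((t - x) * (c - t) * X + (t - x) ^ 2 * C))
      volume x c := by
    exact (by fun_prop : Continuous fun t : ℝ =>
      s * (1 - s) / (c - x) * ((t - x) * (c - t) * X + (t - x) ^ 2 * C)).intervalIntegrable _ _
  have hmono : (∫ t in x..c, |(x - t) * (s * (s - 1) * t ^ (s - 2))|)
      ≤ ∫ t in x..c, s * (1 - s) / (c - x) * ((t - x) * (c - t) * X + (t - x) ^ 2 * C) := by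
    apply intervalIntegral.integral_mono_on hxc hint1 hint2
    intro t ht
    have ht0 : 0 < t := lt_of_lt_of_le hx ht.1
    have htp : (0:ℝ) < t ^ (s - 2) := Real.rpow_pos_of_pos ht0 _
    have habs : |(x - t) * (s * (s - 1) * t ^ (s - 2))|
        = (t - x) * (s * (1 - s) * t ^ (s - 2)) := by
      rw [abs_mul, abs_of_nonpos (by linarith [ht.1] : x - t ≤ 0),
        abs_of_nonpos (by nlinarith [mul_pos (mul_pos hs0
          (by linarith : (0:ℝ) < 1 - s)) htp] : s * (s - 1) * t ^ (s - 2) ≤ 0)]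
      ring
    rw [habs]
    have hinterp := interp_rpow (by linarith : s - 2 ≤ 0) hx hlt ht
    have key := mul_le_mul_of_nonneg_left hinterp
      (mul_nonneg (mul_nonneg hs0.le (by linarith : (0:ℝ) ≤ 1 - s))
        (sub_nonneg.2 ht.1) : (0:ℝ) ≤ s * (1 - s) * (t - x))
    rw [div_mul_eq_mul_div, le_div_iff₀ hcx]
    nlinarith [key]
  refine hmono.trans ?_
  have hrw : (fun t : ℝ => s * (1 - s) / (c - x) * ((t - x) * (c - t) * X + (t - x) ^ 2 * C))
      = fun t : ℝ => s * (1 - s) / (c - x) * ((X * (c - x) * (t - x) ^ 1 - X * (t - x) ^ 2)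
          + C * (t - x) ^ 2) := by
    funext t; ring
  rw [hrw, intervalIntegral.integral_const_mul]
  have hii1 : IntervalIntegrable (fun t : ℝ => X * (c - x) * (t - x) ^ 1) volume x c :=
    (by fun_prop : Continuous fun t : ℝ => X * (c - x) * (t - x) ^ 1).intervalIntegrable _ _
  have hii2 : IntervalIntegrable (fun t : ℝ => X * (t - x) ^ 2) volume x c :=
    (by fun_prop : Continuous fun t : ℝ => X * (t - x) ^ 2).intervalIntegrable _ _
  have hii3 : IntervalIntegrable (fun t : ℝ => C * (t - x) ^ 2) volume x c :=
    (by fun_prop : Continuous fun t : ℝ => C * (t - x) ^ 2).intervalIntegrable _ _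
  rw [intervalIntegral.integral_add (hii1.sub hii2) hii3, intervalIntegral.integral_sub hii1 hii2,
    intervalIntegral.integral_const_mul, intervalIntegral.integral_const_mul,
    intervalIntegral.integral_const_mul, m_right x c 2, m_right x c 1]
  have hne : c - x ≠ 0 := ne_of_gt hcx
  apply le_of_eq
  push_cast
  field_simp
  ring

lemma half_right (s : ℝ) (hs0 : 0 < s) (hs1 : s < 1) {c v : ℝ} (hc : 0 < c) (hcv : c < v) :
    |∫ x in c..v, (x ^ s - c ^ s - s * c ^ (s - 1) * (x - c))|
      ≤ s * (1 - s) * (v - c) ^ 3 * (3 * c ^ (s - 2) + v ^ (s - 2)) / 24 := by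
  have hv : 0 < v := hc.trans hcv
  have hvc : (0:ℝ) < v - c := by linarith
  set C := c ^ (s - 2) with hCdef
  set V := v ^ (s - 2) with hVdef
  set a1 : ℝ := s * (1 - s) * C / 2 with ha1
  set a2 : ℝ := s * (1 - s) * (V - C) / (6 * (v - c)) with ha2
  have hint1 : IntervalIntegrable
      (fun x : ℝ => |x ^ s - c ^ s - s * c ^ (s - 1) * (x - c)|) volume c v := by
    apply ContinuousOn.intervalIntegrable
    apply ContinuousOn.abs
    exact ContinuousOn.sub (ContinuousOn.sub (contOn_rpow' s hc hv) continuousOn_const)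
      (ContinuousOn.mul continuousOn_const (continuousOn_id.sub continuousOn_const))
  have hint2 : IntervalIntegrable (fun x : ℝ => a1 * (x - c) ^ 2 + a2 * (x - c) ^ 3) volume c v :=
    (by fun_prop : Continuous fun x : ℝ => a1 * (x - c) ^ 2 + a2 * (x - c) ^ 3).intervalIntegrable _ _
  have hpt : ∀ x ∈ Set.Icc c v, |x ^ s - c ^ s - s * c ^ (s - 1) * (x - c)|
      ≤ a1 * (x - c) ^ 2 + a2 * (x - c) ^ 3 := by
    intro x hxm
    refine (ptwise_right s hs0 hs1 hc hxm.1).trans ?_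
    have p2 := interp_rpow (by linarith : s - 2 ≤ 0) hc hcv hxm
    have hb : 0 ≤ (v - x) * C + (x - c) * V - (v - c) * x ^ (s - 2) := by linarith [p2]
    have heq : a1 * (x - c) ^ 2 + a2 * (x - c) ^ 3
        - s * (1 - s) * ((x - c) ^ 2 * (C / 3 + x ^ (s - 2) / 6))
        = (x - c) ^ 2 * (s * (1 - s)) / (6 * (v - c))
          * ((v - x) * C + (x - c) * V - (v - c) * x ^ (s - 2)) := by
      rw [ha1, ha2]
      field_simp
      ring
    have hnn : 0 ≤ (x - c) ^ 2 * (s * (1 - s)) / (6 * (v - c))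
        * ((v - x) * C + (x - c) * V - (v - c) * x ^ (s - 2)) := by
      apply mul_nonneg _ hb
      apply div_nonneg _ (by linarith)
      apply mul_nonneg (sq_nonneg _)
      nlinarith
    linarith [heq ▸ hnn]
  refine (intervalIntegral.abs_integral_le_integral_abs hcv.le).trans ?_
  refine (intervalIntegral.integral_mono_on hcv.le hint1 hint2 hpt).trans ?_
  have hii1 : IntervalIntegrable (fun x : ℝ => a1 * (x - c) ^ 2) volume c v :=
    (by fun_prop : Continuous fun x : ℝ => a1 * (x - c) ^ 2).intervalIntegrable _ _
  have hii2 : IntervalIntegrable (fun x : ℝ => a2 * (x - c) ^ 3) volume c v :=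
    (by fun_prop : Continuous fun x : ℝ => a2 * (x - c) ^ 3).intervalIntegrable _ _
  rw [intervalIntegral.integral_add hii1 hii2, intervalIntegral.integral_const_mul,
    intervalIntegral.integral_const_mul, m_right c v 2, m_right c v 3]
  apply le_of_eq
  rw [ha1, ha2]
  have hne : v - c ≠ 0 := ne_of_gt hvc
  push_cast
  field_simp
  ring

lemma half_left (s : ℝ) (hs0 : 0 < s) (hs1 : s < 1) {u c : ℝ} (hu : 0 < u) (huc : u < c) :
    |∫ x in u..c, (x ^ s - c ^ s - s * c ^ (s - 1) * (x - c))|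
      ≤ s * (1 - s) * (c - u) ^ 3 * (3 * c ^ (s - 2) + u ^ (s - 2)) / 24 := by
  have hc : 0 < c := hu.trans huc
  have hcu : (0:ℝ) < c - u := by linarith
  set C := c ^ (s - 2) with hCdef
  set U := u ^ (s - 2) with hUdef
  set a1 : ℝ := s * (1 - s) * C / 2 with ha1
  set a2 : ℝ := s * (1 - s) * (U - C) / (6 * (c - u)) with ha2
  have hint1 : IntervalIntegrable
      (fun x : ℝ => |x ^ s - c ^ s - s * c ^ (s - 1) * (x - c)|) volume u c := by
    apply ContinuousOn.intervalIntegrable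
    apply ContinuousOn.abs
    exact ContinuousOn.sub (ContinuousOn.sub (contOn_rpow' s hu hc) continuousOn_const)
      (ContinuousOn.mul continuousOn_const (continuousOn_id.sub continuousOn_const))
  have hint2 : IntervalIntegrable (fun x : ℝ => a1 * (c - x) ^ 2 + a2 * (c - x) ^ 3) volume u c :=
    (by fun_prop : Continuous fun x : ℝ => a1 * (c - x) ^ 2 + a2 * (c - x) ^ 3).intervalIntegrable _ _
  have hpt : ∀ x ∈ Set.Icc u c, |x ^ s - c ^ s - s * c ^ (s - 1) * (x - c)|
      ≤ a1 * (c - x) ^ 2 + a2 * (c - x) ^ 3 := by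
    intro x hxm
    have hx : 0 < x := lt_of_lt_of_le hu hxm.1
    refine (ptwise_left s hs0 hs1 hx hxm.2).trans ?_
    have p2 := interp_rpow (by linarith : s - 2 ≤ 0) hu huc hxm
    have hb : 0 ≤ (c - x) * U + (x - u) * C - (c - u) * x ^ (s - 2) := by linarith [p2]
    have heq : a1 * (c - x) ^ 2 + a2 * (c - x) ^ 3
        - s * (1 - s) * ((c - x) ^ 2 * (C / 3 + x ^ (s - 2) / 6))
        = (c - x) ^ 2 * (s * (1 - s)) / (6 * (c - u))
          * ((c - x) * U + (x - u) * C - (c - u) * x ^ (s - 2)) := by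
      rw [ha1, ha2]
      field_simp
      ring
    have hnn : 0 ≤ (c - x) ^ 2 * (s * (1 - s)) / (6 * (c - u))
        * ((c - x) * U + (x - u) * C - (c - u) * x ^ (s - 2)) := by
      apply mul_nonneg _ hb
      apply div_nonneg _ (by linarith)
      apply mul_nonneg (sq_nonneg _)
      nlinarith
    linarith [heq ▸ hnn]
  refine (intervalIntegral.abs_integral_le_integral_abs huc.le).trans ?_
  refine (intervalIntegral.integral_mono_on huc.le hint1 hint2 hpt).trans ?_
  have hii1 : IntervalIntegrable (fun x : ℝ => a1 * (c - x) ^ 2) volume u c :=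
    (by fun_prop : Continuous fun x : ℝ => a1 * (c - x) ^ 2).intervalIntegrable _ _
  have hii2 : IntervalIntegrable (fun x : ℝ => a2 * (c - x) ^ 3) volume u c :=
    (by fun_prop : Continuous fun x : ℝ => a2 * (c - x) ^ 3).intervalIntegrable _ _
  rw [intervalIntegral.integral_add hii1 hii2, intervalIntegral.integral_const_mul,
    intervalIntegral.integral_const_mul, m_left u c 2, m_left u c 3]
  apply le_of_eq
  rw [ha1, ha2]
  have hne : c - u ≠ 0 := ne_of_gt hcu
  push_cast
  field_simp
  ring

lemma mid_est (s : ℝ) (hs0 : 0 < s) (hs1 : s < 1) {u v : ℝ} (hu : 0 < u) (huv : u < v) :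
    |(∫ x in u..v, x ^ s) - (v - u) * ((u + v) / 2) ^ s|
      ≤ s * (1 - s) * ((v - u) / 2) ^ 3
          * (u ^ (s - 2) + v ^ (s - 2) + 6 * ((u + v) / 2) ^ (s - 2)) / 24 := by
  have hv : 0 < v := hu.trans huv
  set c : ℝ := (u + v) / 2 with hcdef
  have hc : 0 < c := by rw [hcdef]; linarith
  have huc : u < c := by rw [hcdef]; linarith
  have hcv : c < v := by rw [hcdef]; linarith
  have hglint : IntervalIntegrable
      (fun x : ℝ => x ^ s - c ^ s - s * c ^ (s - 1) * (x - c)) volume u c := by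
    apply ContinuousOn.intervalIntegrable
    exact ContinuousOn.sub (ContinuousOn.sub (contOn_rpow' s hu hc) continuousOn_const)
      (ContinuousOn.mul continuousOn_const (continuousOn_id.sub continuousOn_const))
  have hgrint : IntervalIntegrable
      (fun x : ℝ => x ^ s - c ^ s - s * c ^ (s - 1) * (x - c)) volume c v := by
    apply ContinuousOn.intervalIntegrable
    exact ContinuousOn.sub (ContinuousOn.sub (contOn_rpow' s hc hv) continuousOn_const)
      (ContinuousOn.mul continuousOn_const (continuousOn_id.sub continuousOn_const))
  have hsplit : (∫ x in u..c, (x ^ s - c ^ s - s * c ^ (s - 1) * (x - c)))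
      + (∫ x in c..v, (x ^ s - c ^ s - s * c ^ (s - 1) * (x - c)))
      = ∫ x in u..v, (x ^ s - c ^ s - s * c ^ (s - 1) * (x - c)) :=
    intervalIntegral.integral_add_adjacent_intervals hglint hgrint
  have hB : ∫ x in u..v, (c ^ s + s * c ^ (s - 1) * (x - c)) = (v - u) * c ^ s := by
    rw [intervalIntegral.integral_add intervalIntegrable_const
      ((by fun_prop : Continuous fun x : ℝ => s * c ^ (s - 1) * (x - c)).intervalIntegrable _ _),
      intervalIntegral.integral_const, intervalIntegral.integral_const_mul,
      intervalIntegral.integral_sub intervalIntegral.intervalIntegrable_id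
        intervalIntegrable_const,
      integral_id, intervalIntegral.integral_const]
    simp only [smul_eq_mul]
    rw [hcdef]
    ring
  have hA : ∫ x in u..v, (x ^ s - c ^ s - s * c ^ (s - 1) * (x - c))
      = (∫ x in u..v, x ^ s) - (v - u) * c ^ s := by
    have h1 : IntervalIntegrable (fun x : ℝ => x ^ s) volume u v := ii_rpow s hu hv
    have h2 : IntervalIntegrable (fun x : ℝ => c ^ s + s * c ^ (s - 1) * (x - c)) volume u v :=
      (by fun_prop : Continuous fun x : ℝ =>
        c ^ s + s * c ^ (s - 1) * (x - c)).intervalIntegrable _ _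
    have e : (fun x : ℝ => x ^ s - c ^ s - s * c ^ (s - 1) * (x - c))
        = fun x : ℝ => x ^ s - (c ^ s + s * c ^ (s - 1) * (x - c)) := by
      funext x; ring
    rw [e, intervalIntegral.integral_sub h1 h2, hB]
  have hL := half_left s hs0 hs1 hu huc
  have hR := half_right s hs0 hs1 hc hcv
  have e1 : c - u = (v - u) / 2 := by rw [hcdef]; ring
  have e2 : v - c = (v - u) / 2 := by rw [hcdef]; ring
  rw [e1] at hL
  rw [e2] at hR
  calc |(∫ x in u..v, x ^ s) - (v - u) * c ^ s|
      = |(∫ x in u..c, (x ^ s - c ^ s - s * c ^ (s - 1) * (x - c)))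
          + (∫ x in c..v, (x ^ s - c ^ s - s * c ^ (s - 1) * (x - c)))| := by
        rw [hsplit, hA]
    _ ≤ |(∫ x in u..c, (x ^ s - c ^ s - s * c ^ (s - 1) * (x - c)))|
          + |(∫ x in c..v, (x ^ s - c ^ s - s * c ^ (s - 1) * (x - c)))| := abs_add_le _ _
    _ ≤ s * (1 - s) * ((v - u) / 2) ^ 3 * (3 * c ^ (s - 2) + u ^ (s - 2)) / 24
          + s * (1 - s) * ((v - u) / 2) ^ 3 * (3 * c ^ (s - 2) + v ^ (s - 2)) / 24 := by
        exact add_le_add hL hR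
    _ = s * (1 - s) * ((v - u) / 2) ^ 3
          * (u ^ (s - 2) + v ^ (s - 2) + 6 * c ^ (s - 2)) / 24 := by ring

set_option maxHeartbeats 1000000 in
theorem stmt17 (a b s : ℝ) (ha : 0 < a) (hab : a < b) (hs0 : 0 < s) (hs1 : s < 1) :
    |((b ^ (s + 1) - a ^ (s + 1)) / ((b - a) * (s + 1))) - ((a + b) / 2) ^ s|
        ≤ (b - a) ^ 2 * s * (1 - s) / (8 * (s + 1) * (s + 2) * (s + 3)) *
            (a ^ (s - 2) + (s ^ 2 + 3 * s + 2) * ((a + b) / 2) ^ (s - 2) + b ^ (s - 2)) ∧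
      |((b ^ (s + 1) - a ^ (s + 1)) / ((b - a) * (s + 1))) - (((3 * a + b) / 4) ^ s + ((a + 3 * b) / 4) ^ s) / 2|
        ≤ (b - a) ^ 2 * s * (1 - s) / (8 * (s + 1) * (s + 2) * (s + 3)) *
            (2 * (a ^ (s - 2) + b ^ (s - 2))
              + (3 * s ^ 2 + 5 * s + 6) * (((3 * a + b) / 4) ^ (s - 2) + ((a + 3 * b) / 4) ^ (s - 2))) := by
  have hb : 0 < b := ha.trans hab
  have hba : (0:ℝ) < b - a := by linarith
  have hne : b - a ≠ 0 := ne_of_gt hba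
  have hs1' : (0:ℝ) < 1 - s := by linarith
  have hI : ∫ x in a..b, x ^ s = (b ^ (s + 1) - a ^ (s + 1)) / (s + 1) :=
    integral_rpow (Or.inl (by linarith))
  set A := a ^ (s - 2) with hA
  set B := b ^ (s - 2) with hB
  set M := ((a + b) / 2) ^ (s - 2) with hM
  set Q1 := ((3 * a + b) / 4) ^ (s - 2) with hQ1
  set Q2 := ((a + 3 * b) / 4) ^ (s - 2) with hQ2
  have hApos : 0 < A := Real.rpow_pos_of_pos ha _
  have hBpos : 0 < B := Real.rpow_pos_of_pos hb _
  have hMpos : 0 < M := Real.rpow_pos_of_pos (by linarith) _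
  have hQ1pos : 0 < Q1 := Real.rpow_pos_of_pos (by linarith) _
  have hQ2pos : 0 < Q2 := Real.rpow_pos_of_pos (by linarith) _
  have h24 : (s + 1) * (s + 2) * (s + 3) ≤ 24 := by
    nlinarith [mul_nonneg hs1'.le (by positivity : (0:ℝ) ≤ s ^ 2 + 7 * s + 18)]
  have hPpos : (0:ℝ) < 8 * (s + 1) * (s + 2) * (s + 3) := by positivity
  constructor
  · -- midpoint estimate
    have hm := mid_est s hs0 hs1 ha hab
    have hLrw : (b ^ (s + 1) - a ^ (s + 1)) / ((b - a) * (s + 1)) - ((a + b) / 2) ^ s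
        = ((∫ x in a..b, x ^ s) - (b - a) * ((a + b) / 2) ^ s) / (b - a) := by
      rw [hI]; field_simp
    rw [hLrw, abs_div, abs_of_pos hba]
    refine ((div_le_div_iff_of_pos_right hba).mpr hm).trans ?_
    have e3 : s * (1 - s) * ((b - a) / 2) ^ 3 * (A + B + 6 * M) / 24 / (b - a)
        = s * (1 - s) * (b - a) ^ 2 * (A + B + 6 * M) / 192 := by
      field_simp; ring
    have e4 : (a ^ (s - 2) + b ^ (s - 2) + 6 * ((a + b) / 2) ^ (s - 2)) = A + B + 6 * M := rfl
    rw [e4, e3]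
    have hcore : (A + B + 6 * M) * ((s + 1) * (s + 2) * (s + 3))
        ≤ 24 * (A + (s ^ 2 + 3 * s + 2) * M + B) := by
      nlinarith [mul_nonneg (sub_nonneg.2 h24) hApos.le,
        mul_nonneg (sub_nonneg.2 h24) hBpos.le,
        mul_nonneg (mul_nonneg (mul_nonneg
          (by linarith : (0:ℝ) ≤ 6 * (s + 1)) (by linarith : (0:ℝ) ≤ s + 2)) hs1'.le) hMpos.le]
    rw [div_mul_eq_mul_div, div_le_div_iff₀ (by norm_num) hPpos]
    have hK : (0:ℝ) ≤ 8 * (s * ((1 - s) * (b - a) ^ 2)) :=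
      mul_nonneg (by norm_num) (mul_nonneg hs0.le (mul_nonneg hs1'.le (sq_nonneg _)))
    have hfull := mul_le_mul_of_nonneg_left hcore hK
    refine le_trans (le_of_eq (by ring)) (le_trans hfull (le_of_eq (by ring)))
  · -- averaged midpoint estimate
    set m : ℝ := (a + b) / 2 with hmdef
    have ham : a < m := by rw [hmdef]; linarith
    have hmb : m < b := by rw [hmdef]; linarith
    have hm0 : 0 < m := ha.trans ham
    have hm1 := mid_est s hs0 hs1 ha ham
    have hm2 := mid_est s hs0 hs1 hm0 hmb
    have eq1 : (a + m) / 2 = (3 * a + b) / 4 := by rw [hmdef]; ring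
    have eq2 : (m + b) / 2 = (a + 3 * b) / 4 := by rw [hmdef]; ring
    have eq3 : m - a = (b - a) / 2 := by rw [hmdef]; ring
    have eq4 : b - m = (b - a) / 2 := by rw [hmdef]; ring
    rw [eq1, eq3] at hm1
    rw [eq2, eq4] at hm2
    have hsplit : (∫ x in a..m, x ^ s) + (∫ x in m..b, x ^ s) = ∫ x in a..b, x ^ s :=
      intervalIntegral.integral_add_adjacent_intervals (ii_rpow s ha hm0) (ii_rpow s hm0 hb)
    have hId : (b ^ (s + 1) - a ^ (s + 1)) / ((b - a) * (s + 1))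
        = ((∫ x in a..m, x ^ s) + (∫ x in m..b, x ^ s)) / (b - a) := by
      rw [← hsplit] at hI
      rw [hI, div_div, mul_comm]
    have hLrw : (b ^ (s + 1) - a ^ (s + 1)) / ((b - a) * (s + 1))
          - (((3 * a + b) / 4) ^ s + ((a + 3 * b) / 4) ^ s) / 2
        = (((∫ x in a..m, x ^ s) - (b - a) / 2 * ((3 * a + b) / 4) ^ s)
            + ((∫ x in m..b, x ^ s) - (b - a) / 2 * ((a + 3 * b) / 4) ^ s)) / (b - a) := by
      rw [hId]
      field_simp
      ring
    rw [hLrw, abs_div, abs_of_pos hba]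
    have htri : |((∫ x in a..m, x ^ s) - (b - a) / 2 * ((3 * a + b) / 4) ^ s)
          + ((∫ x in m..b, x ^ s) - (b - a) / 2 * ((a + 3 * b) / 4) ^ s)|
        ≤ s * (1 - s) * ((b - a) / 2 / 2) ^ 3 * (A + m ^ (s - 2) + 6 * Q1) / 24
          + s * (1 - s) * ((b - a) / 2 / 2) ^ 3 * (m ^ (s - 2) + B + 6 * Q2) / 24 :=
      (abs_add_le _ _).trans (add_le_add hm1 hm2)
    refine ((div_le_div_iff_of_pos_right hba).mpr htri).trans ?_
    have hMQ1 : m ^ (s - 2) ≤ Q1 := by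
      rw [hQ1]
      exact Real.rpow_le_rpow_of_nonpos (by linarith) (by rw [hmdef]; linarith) (by linarith)
    have hcore : (A + B + 2 * Q1 + 6 * Q1 + 6 * Q2) * ((s + 1) * (s + 2) * (s + 3))
        ≤ 192 * (2 * (A + B) + (3 * s ^ 2 + 5 * s + 6) * (Q1 + Q2)) := by
      have c1 : (0:ℝ) ≤ (384 - (s + 1) * (s + 2) * (s + 3)) * A :=
        mul_nonneg (by linarith) hApos.le
      have c2 : (0:ℝ) ≤ (384 - (s + 1) * (s + 2) * (s + 3)) * B :=
        mul_nonneg (by linarith) hBpos.le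
      have c3 : (0:ℝ) ≤ (192 * (3 * s ^ 2 + 5 * s + 6) - 8 * ((s + 1) * (s + 2) * (s + 3))) * Q1 :=
        mul_nonneg (by linarith [h24, sq_nonneg s]) hQ1pos.le
      have c4 : (0:ℝ) ≤ (192 * (3 * s ^ 2 + 5 * s + 6) - 6 * ((s + 1) * (s + 2) * (s + 3))) * Q2 :=
        mul_nonneg (by linarith [h24, sq_nonneg s]) hQ2pos.le
      linarith [c1, c2, c3, c4]
    have e3 : (s * (1 - s) * ((b - a) / 2 / 2) ^ 3 * (A + m ^ (s - 2) + 6 * Q1) / 24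
          + s * (1 - s) * ((b - a) / 2 / 2) ^ 3 * (m ^ (s - 2) + B + 6 * Q2) / 24) / (b - a)
        = s * (1 - s) * (b - a) ^ 2 * (A + B + 2 * m ^ (s - 2) + 6 * Q1 + 6 * Q2) / 1536 := by
      field_simp; ring
    rw [e3]
    have hstep : s * (1 - s) * (b - a) ^ 2 * (A + B + 2 * m ^ (s - 2) + 6 * Q1 + 6 * Q2) / 1536
        ≤ s * (1 - s) * (b - a) ^ 2 * (A + B + 2 * Q1 + 6 * Q1 + 6 * Q2) / 1536 := by
      apply div_le_div_of_nonneg_right ?_ (by norm_num)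
      · apply mul_le_mul_of_nonneg_left (by linarith [hMQ1])
        exact mul_nonneg (mul_nonneg hs0.le hs1'.le) (sq_nonneg _)
    refine hstep.trans ?_
    rw [div_mul_eq_mul_div, div_le_div_iff₀ (by norm_num) hPpos]
    have hK : (0:ℝ) ≤ 8 * (s * ((1 - s) * (b - a) ^ 2)) :=
      mul_nonneg (by norm_num) (mul_nonneg hs0.le (mul_nonneg hs1'.le (sq_nonneg _)))
    have hfull := mul_le_mul_of_nonneg_left hcore hK
    refine le_trans (le_of_eq (by ring)) (le_trans hfull (le_of_eq (by ring)))
end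

section
/- Let 0 < a < b, 0 < s < 1, and q > 1 with 1/p + 1/q = 1. Then |L_s^s(a,b) − A(a,b)^s| ≤ ((b−a)² s(1−s)/(16(s+1)^{1/q}(2p+1)^{1/p}))[(a^{(s−2)q} + A(a,b)^{(s−2)q})^{1/q} + (A(a,b)^{(s−2)q} + b^{(s−2)q})^{1/q}]. (Here s(1−s) = |s(s−1)| is the absolute value of the second derivative coefficient of x ↦ x^s.) -/
open MeasureTheory

open Set intervalIntegral Interval


-- convexity of x ^ c on Ioi 0 for c ≤ 0
lemma convexOn_rpow_neg {c : ℝ} (hc : c ≤ 0) :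
    ConvexOn ℝ (Set.Ioi (0:ℝ)) (fun x : ℝ => x ^ c) := by
  have hev : ∀ x ∈ Set.Ioi (0:ℝ), deriv (fun y : ℝ => y ^ c) x = c * x ^ (c - 1) := by
    intro x hx; exact Real.deriv_rpow_const x c
  have hgdiff : ∀ x ∈ Set.Ioi (0:ℝ), DifferentiableAt ℝ (fun y : ℝ => c * y ^ (c - 1)) x := by
    intro x hx
    exact (Real.hasDerivAt_rpow_const (p := c - 1) (Or.inl (ne_of_gt hx))).differentiableAt.const_mul c
  have heq : ∀ x ∈ Set.Ioi (0:ℝ),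
      deriv (fun y : ℝ => y ^ c) =ᶠ[nhds x] fun y : ℝ => c * y ^ (c - 1) := by
    intro x hx
    filter_upwards [IsOpen.mem_nhds isOpen_Ioi hx] with y hy using hev y hy
  apply convexOn_of_deriv2_nonneg' (convex_Ioi 0)
  · intro x hx
    exact (Real.hasDerivAt_rpow_const (p := c) (Or.inl (ne_of_gt hx))).differentiableAt.differentiableWithinAt
  · intro x hx
    exact (((heq x hx).differentiableAt_iff).2 (hgdiff x hx)).differentiableWithinAt
  · intro x hx
    have h2 : deriv^[2] (fun y : ℝ => y ^ c) x = c * ((c - 1) * x ^ (c - 2)) := by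
      rw [Function.iterate_succ, Function.iterate_one, Function.comp_apply]
      rw [Filter.EventuallyEq.deriv_eq (heq x hx)]
      rw [deriv_const_mul _ ((Real.hasDerivAt_rpow_const (p := c - 1) (Or.inl (ne_of_gt hx))).differentiableAt)]
      rw [Real.deriv_rpow_const x (c - 1)]
      ring_nf
    rw [h2]
    have : 0 ≤ c * (c - 1) := by nlinarith
    have := Real.rpow_nonneg (le_of_lt hx) (c - 2)
    nlinarith

-- chord bound
lemma rpow_chord {c : ℝ} (hc : c ≤ 0) {u v x : ℝ} (hu : 0 < u) (huv : u < v)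
    (hx : x ∈ Set.Icc u v) :
    x ^ c ≤ ((v - x) * u ^ c + (x - u) * v ^ c) / (v - u) := by
  have hvu : 0 < v - u := by linarith
  obtain ⟨hx1, hx2⟩ := hx
  have ht1 : 0 ≤ (v - x) / (v - u) := div_nonneg (by linarith) (le_of_lt hvu)
  have ht2 : 0 ≤ (x - u) / (v - u) := div_nonneg (by linarith) (le_of_lt hvu)
  have hts : (v - x) / (v - u) + (x - u) / (v - u) = 1 := by field_simp; ring
  have := (convexOn_rpow_neg hc).2 (Set.mem_Ioi.2 hu) (Set.mem_Ioi.2 (lt_trans hu huv))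
    ht1 ht2 hts
  simp only [smul_eq_mul] at this
  have hxe : (v - x) / (v - u) * u + (x - u) / (v - u) * v = x := by field_simp; ring
  rw [hxe] at this
  calc x ^ c ≤ (v - x) / (v - u) * u ^ c + (x - u) / (v - u) * v ^ c := this
    _ = ((v - x) * u ^ c + (x - u) * v ^ c) / (v - u) := by ring


lemma int_sq_rpow {s : ℝ} (hs0 : 0 < s) (hs1 : s < 1) {u v : ℝ} (c : ℝ) (hu : 0 < u)
    (huv : u ≤ v) :
    ∫ x in u..v, (x - c) ^ 2 * x ^ (s - 2)
      = (v ^ (s + 1) - u ^ (s + 1)) / (s + 1) - 2 * c * ((v ^ s - u ^ s) / s)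
        + c ^ 2 * ((v ^ (s - 1) - u ^ (s - 1)) / (s - 1)) := by
  have h0 : (0:ℝ) ∉ [[u, v]] := by
    rw [Set.uIcc_of_le huv]; intro h; exact absurd h.1 (not_le.2 hu)
  have hInt : ∀ r : ℝ, IntervalIntegrable (fun x : ℝ => x ^ r) MeasureTheory.volume u v := by
    intro r
    apply ContinuousOn.intervalIntegrable
    apply ContinuousOn.rpow_const continuousOn_id
    intro x hx
    left
    rw [Set.uIcc_of_le huv] at hx
    exact ne_of_gt (lt_of_lt_of_le hu hx.1)
  have hcongr : ∀ x ∈ [[u, v]],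
      (x - c) ^ 2 * x ^ (s - 2) = x ^ s - 2 * c * x ^ (s - 1) + c ^ 2 * x ^ (s - 2) := by
    intro x hx
    rw [Set.uIcc_of_le huv] at hx
    have hx0 : 0 < x := lt_of_lt_of_le hu hx.1
    have e1 : x ^ s = x ^ (s - 2) * x ^ 2 := by
      rw [show s = (s - 2) + 2 by ring, Real.rpow_add hx0,
        show (2:ℝ) = ((2:ℕ):ℝ) by norm_num, Real.rpow_natCast]
      ring_nf
    have e2 : x ^ (s - 1) = x ^ (s - 2) * x := by
      rw [show s - 1 = (s - 2) + 1 by ring, Real.rpow_add_one (ne_of_gt hx0)]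
    rw [e1, e2]; ring
  rw [integral_congr hcongr]
  have i1 : IntervalIntegrable (fun x : ℝ => x ^ s - 2 * c * x ^ (s - 1)) MeasureTheory.volume u v :=
    (hInt s).sub ((hInt (s - 1)).const_mul _)
  rw [integral_add i1 ((hInt (s - 2)).const_mul _), integral_sub (hInt s) ((hInt (s - 1)).const_mul _),
    intervalIntegral.integral_const_mul, intervalIntegral.integral_const_mul]
  rw [integral_rpow (Or.inr ⟨by linarith, h0⟩), integral_rpow (Or.inr ⟨by linarith, h0⟩),
    integral_rpow (Or.inr ⟨by linarith, h0⟩)]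
  · ring_nf


lemma key_identity {a b s : ℝ} (ha : 0 < a) (hab : a < b) (hs0 : 0 < s) (hs1 : s < 1) :
    ((a + b) / 2) ^ s - (b ^ (s + 1) - a ^ (s + 1)) / ((b - a) * (s + 1))
      = s * (1 - s) / (2 * (b - a)) *
          ((∫ x in a..(a + b) / 2, (x - a) ^ 2 * x ^ (s - 2))
            + ∫ x in ((a + b) / 2)..b, (x - b) ^ 2 * x ^ (s - 2)) := by
  set m : ℝ := (a + b) / 2 with hm
  have hma : a ≤ m := by rw [hm]; linarith
  have hmb : m ≤ b := by rw [hm]; linarith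
  have hm0 : 0 < m := by rw [hm]; linarith
  rw [int_sq_rpow hs0 hs1 a ha hma, int_sq_rpow hs0 hs1 b hm0 hmb]
  have ea1 : a ^ (s + 1) = a ^ s * a := Real.rpow_add_one (ne_of_gt ha) s
  have eb1 : b ^ (s + 1) = b ^ s * b := Real.rpow_add_one (ne_of_gt (lt_trans ha hab)) s
  have em1 : m ^ (s + 1) = m ^ s * m := Real.rpow_add_one (ne_of_gt hm0) s
  have ea2 : a ^ (s - 1) = a ^ s / a := Real.rpow_sub_one (ne_of_gt ha) s
  have eb2 : b ^ (s - 1) = b ^ s / b := Real.rpow_sub_one (ne_of_gt (lt_trans ha hab)) s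
  have em2 : m ^ (s - 1) = m ^ s / m := Real.rpow_sub_one (ne_of_gt hm0) s
  rw [ea1, eb1, em1, ea2, eb2, em2]
  have h1 : a ≠ 0 := ne_of_gt ha
  have h2 : b ≠ 0 := ne_of_gt (lt_trans ha hab)
  have h3 : m ≠ 0 := ne_of_gt hm0
  have h4 : s ≠ 0 := ne_of_gt hs0
  have h5 : s - 1 ≠ 0 := by intro h; apply absurd hs1; simp [sub_eq_zero] at h; simp [h]
  have h6 : s + 1 ≠ 0 := by positivity
  have h7 : b - a ≠ 0 := by intro h; rw [sub_eq_zero] at h; exact absurd h (ne_of_gt hab)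
  have hm2 : m = (a + b) / 2 := hm
  field_simp
  rw [hm2]
  ring_nf


lemma I1_bound {s a m : ℝ} (hs1 : s < 1) (ha : 0 < a) (ham : a < m) :
    ∫ x in a..m, (x - a) ^ 2 * x ^ (s - 2)
      ≤ (m - a) ^ 3 * (a ^ (s - 2) + 3 * m ^ (s - 2)) / 12 := by
  set A := a ^ (s - 2) with hA
  set M := m ^ (s - 2) with hM
  have hma : (0:ℝ) < m - a := by linarith
  have hint2 : ∫ x in a..m, (x - a) ^ 2 * (((m - x) * A + (x - a) * M) / (m - a))
      = (m - a) ^ 3 * (A + 3 * M) / 12 := by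
    have hF : ∀ x : ℝ, HasDerivAt
        (fun y : ℝ => (A * ((m - a) / 3 * (y - a) ^ 3 - (y - a) ^ 4 / 4)
          + M * ((y - a) ^ 4 / 4)) / (m - a))
        ((x - a) ^ 2 * (((m - x) * A + (x - a) * M) / (m - a))) x := by
      intro x
      have d3 : HasDerivAt (fun y : ℝ => (y - a) ^ 3) (3 * (x - a) ^ 2) x := by
        simpa using ((hasDerivAt_id x).sub_const a).fun_pow 3
      have d4 : HasDerivAt (fun y : ℝ => (y - a) ^ 4) (4 * (x - a) ^ 3) x := by
        simpa using ((hasDerivAt_id x).sub_const a).fun_pow 4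
      have h := ((((d3.const_mul ((m - a) / 3)).sub (d4.div_const 4)).const_mul A).add
          ((d4.div_const 4).const_mul M)).div_const (m - a)
      exact h.congr_deriv (by ring)
    rw [integral_eq_sub_of_hasDerivAt (fun x _ => hF x)
      (Continuous.intervalIntegrable (by fun_prop) _ _)]
    field_simp
    ring
  rw [← hint2]
  apply integral_mono_on (le_of_lt ham)
  · apply ContinuousOn.intervalIntegrable
    rw [Set.uIcc_of_le (le_of_lt ham)]
    apply ContinuousOn.mul (by fun_prop)
    apply ContinuousOn.rpow_const continuousOn_id
    intro x hx; exact Or.inl (ne_of_gt (lt_of_lt_of_le ha hx.1))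
  · exact Continuous.intervalIntegrable (by fun_prop) _ _
  · intro x hx
    have h1 : (0:ℝ) ≤ (x - a) ^ 2 := sq_nonneg _
    have h2 := rpow_chord (by linarith : s - 2 ≤ 0) ha ham hx
    calc (x - a) ^ 2 * x ^ (s - 2)
        ≤ (x - a) ^ 2 * (((m - x) * A + (x - a) * M) / (m - a)) := by
          apply mul_le_mul_of_nonneg_left _ h1
          exact h2
      _ = _ := rfl

lemma I2_bound {s m b : ℝ} (hs1 : s < 1) (hm : 0 < m) (hmb : m < b) :
    ∫ x in m..b, (x - b) ^ 2 * x ^ (s - 2)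
      ≤ (b - m) ^ 3 * (3 * m ^ (s - 2) + b ^ (s - 2)) / 12 := by
  set M := m ^ (s - 2) with hM
  set B := b ^ (s - 2) with hB
  have hbm : (0:ℝ) < b - m := by linarith
  have hint2 : ∫ x in m..b, (x - b) ^ 2 * (((b - x) * M + (x - m) * B) / (b - m))
      = (b - m) ^ 3 * (3 * M + B) / 12 := by
    have hF : ∀ x : ℝ, HasDerivAt
        (fun y : ℝ => (M * (-((b - y) ^ 4 / 4))
          + B * (-((y - m) * (b - y) ^ 3) / 3 - (b - y) ^ 4 / 12)) / (b - m))
        ((x - b) ^ 2 * (((b - x) * M + (x - m) * B) / (b - m))) x := by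
      intro x
      have d4 : HasDerivAt (fun y : ℝ => (b - y) ^ 4) (4 * (b - x) ^ 3 * (-1)) x := by
        simpa using ((hasDerivAt_const x b).sub (hasDerivAt_id x)).fun_pow 4
      have d3 : HasDerivAt (fun y : ℝ => (y - m) * (b - y) ^ 3)
          ((b - x) ^ 3 + (x - m) * (3 * (b - x) ^ 2 * (-1))) x := by
        have h1 : HasDerivAt (fun y : ℝ => (y - m)) 1 x := (hasDerivAt_id x).sub_const m
        have h2 : HasDerivAt (fun y : ℝ => (b - y) ^ 3) (3 * (b - x) ^ 2 * (-1)) x := by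
          simpa using ((hasDerivAt_const x b).sub (hasDerivAt_id x)).fun_pow 3
        have := h1.mul h2
        exact this.congr_deriv (by ring)
      have h := (((d4.div_const 4).neg.const_mul M).add
          (((d3.neg.div_const 3).sub (d4.div_const 12)).const_mul B)).div_const (b - m)
      exact h.congr_deriv (by ring)
    rw [integral_eq_sub_of_hasDerivAt (fun x _ => hF x)
      (Continuous.intervalIntegrable (by fun_prop) _ _)]
    field_simp
    ring
  rw [← hint2]
  apply integral_mono_on (le_of_lt hmb)
  · apply ContinuousOn.intervalIntegrable
    rw [Set.uIcc_of_le (le_of_lt hmb)]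
    apply ContinuousOn.mul (by fun_prop)
    apply ContinuousOn.rpow_const continuousOn_id
    intro x hx; exact Or.inl (ne_of_gt (lt_of_lt_of_le hm hx.1))
  · exact Continuous.intervalIntegrable (by fun_prop) _ _
  · intro x hx
    have h1 : (0:ℝ) ≤ (x - b) ^ 2 := sq_nonneg _
    have h2 := rpow_chord (by linarith : s - 2 ≤ 0) hm hmb hx
    exact mul_le_mul_of_nonneg_left h2 h1


lemma D_le_three {p : ℝ} (hp : 1 < p) : (2 * p + 1) ^ (1 / p) ≤ 3 := by
  have h1 : (2 * p + 1 : ℝ) ≤ 3 ^ p := by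
    have := one_add_mul_self_le_rpow_one_add (by norm_num : (-1:ℝ) ≤ 2) (le_of_lt hp)
    calc (2 * p + 1 : ℝ) = 1 + p * 2 := by ring
      _ ≤ (1 + 2) ^ p := this
      _ = 3 ^ p := by norm_num
  have hp0 : 0 < p := by linarith
  calc (2 * p + 1) ^ (1 / p) ≤ (3 ^ p) ^ (1 / p) :=
        Real.rpow_le_rpow (by positivity) h1 (by positivity)
    _ = 3 := by
        rw [← Real.rpow_mul (by norm_num), mul_one_div, div_self (ne_of_gt hp0), Real.rpow_one]

lemma two_point_jensen {x y q : ℝ} (hx : 0 ≤ x) (hy : 0 ≤ y) (hq : 1 < q) :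
    2 ^ (1 / q - 1) * (x + y) ≤ (x ^ q + y ^ q) ^ (1 / q) := by
  have hq0 : 0 < q := by linarith
  have key : (x + y) ^ q ≤ 2 ^ (q - 1) * (x ^ q + y ^ q) := by
    have h := NNReal.rpow_add_le_mul_rpow_add_rpow x.toNNReal y.toNNReal (le_of_lt hq)
    have := NNReal.coe_le_coe.2 h
    push_cast at this
    rw [Real.coe_toNNReal x hx, Real.coe_toNNReal y hy] at this
    convert this using 2 <;> norm_num
  have h2 : x + y ≤ 2 ^ ((q - 1) / q) * (x ^ q + y ^ q) ^ (1 / q) := by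
    calc x + y = ((x + y) ^ q) ^ (1 / q) := by
          rw [← Real.rpow_mul (by linarith), mul_one_div, div_self (ne_of_gt hq0), Real.rpow_one]
      _ ≤ (2 ^ (q - 1) * (x ^ q + y ^ q)) ^ (1 / q) := by
          apply Real.rpow_le_rpow (by positivity) key (by positivity)
      _ = 2 ^ ((q - 1) / q) * (x ^ q + y ^ q) ^ (1 / q) := by
          rw [Real.mul_rpow (by positivity) (by positivity), ← Real.rpow_mul (by norm_num),
            mul_one_div]
  have h3 : (2:ℝ) ^ (1 / q - 1) * (2 ^ ((q - 1) / q)) = 1 := by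
    rw [← Real.rpow_add (by norm_num)]
    have : 1 / q - 1 + (q - 1) / q = 0 := by field_simp; ring
    rw [this, Real.rpow_zero]
  calc 2 ^ (1 / q - 1) * (x + y) ≤ 2 ^ (1 / q - 1) * (2 ^ ((q - 1) / q) * (x ^ q + y ^ q) ^ (1 / q)) := by
        apply mul_le_mul_of_nonneg_left h2 (by positivity)
    _ = (x ^ q + y ^ q) ^ (1 / q) := by rw [← mul_assoc, h3, one_mul]


set_option maxHeartbeats 1000000 in
theorem stmt18 (a b s p q : ℝ) (ha : 0 < a) (hab : a < b) (hs0 : 0 < s) (hs1 : s < 1)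
    (hp : 1 < p) (hq : 1 < q) (hpq : 1 / p + 1 / q = 1) :
    |((b ^ (s + 1) - a ^ (s + 1)) / ((b - a) * (s + 1))) - ((a + b) / 2) ^ s|
      ≤ (b - a) ^ 2 * s * (1 - s) / (16 * (s + 1) ^ (1 / q) * (2 * p + 1) ^ (1 / p)) *
          ((a ^ ((s - 2) * q) + ((a + b) / 2) ^ ((s - 2) * q)) ^ (1 / q)
            + (((a + b) / 2) ^ ((s - 2) * q) + b ^ ((s - 2) * q)) ^ (1 / q)) := by
  have hb : (0:ℝ) < b := lt_trans ha hab
  have hm0 : (0:ℝ) < (a + b) / 2 := by linarith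
  have hma : a < (a + b) / 2 := by linarith
  have hmb : (a + b) / 2 < b := by linarith
  set m : ℝ := (a + b) / 2 with hm
  set A : ℝ := a ^ (s - 2) with hA
  set M : ℝ := m ^ (s - 2) with hM
  set Bv : ℝ := b ^ (s - 2) with hBv
  have hA0 : 0 ≤ A := Real.rpow_nonneg (le_of_lt ha) _
  have hM0 : 0 ≤ M := Real.rpow_nonneg (le_of_lt hm0) _
  have hB0 : 0 ≤ Bv := Real.rpow_nonneg (le_of_lt hb) _
  set X : ℝ := (b - a) ^ 2 * s * (1 - s) with hX
  have hba' : (0:ℝ) < b - a := by linarith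
  have hs1' : (0:ℝ) < 1 - s := by linarith
  have hX0 : 0 ≤ X := by rw [hX]; positivity
  -- the two integrals are nonneg
  have hI1nn : 0 ≤ ∫ x in a..m, (x - a) ^ 2 * x ^ (s - 2) := by
    apply intervalIntegral.integral_nonneg (le_of_lt hma)
    intro u hu
    have : (0:ℝ) ≤ u ^ (s - 2) := Real.rpow_nonneg (by linarith [hu.1] : (0:ℝ) ≤ u) _
    positivity
  have hI2nn : 0 ≤ ∫ x in m..b, (x - b) ^ 2 * x ^ (s - 2) := by
    apply intervalIntegral.integral_nonneg (le_of_lt hmb)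
    intro u hu
    have : (0:ℝ) ≤ u ^ (s - 2) := Real.rpow_nonneg (by linarith [hu.1] : (0:ℝ) ≤ u) _
    positivity
  have hc0 : (0:ℝ) ≤ s * (1 - s) / (2 * (b - a)) := by positivity
  have hid := key_identity ha hab hs0 hs1
  rw [← hm] at hid
  -- LHS bound
  have habs : |((b ^ (s + 1) - a ^ (s + 1)) / ((b - a) * (s + 1))) - m ^ s|
      = m ^ s - (b ^ (s + 1) - a ^ (s + 1)) / ((b - a) * (s + 1)) := by
    rw [abs_sub_comm, abs_of_nonneg]
    rw [hid]
    positivity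
  have hLHS : |((b ^ (s + 1) - a ^ (s + 1)) / ((b - a) * (s + 1))) - m ^ s|
      ≤ X * (A + 6 * M + Bv) / 192 := by
    rw [habs, hid]
    calc s * (1 - s) / (2 * (b - a)) *
          ((∫ x in a..m, (x - a) ^ 2 * x ^ (s - 2)) + ∫ x in m..b, (x - b) ^ 2 * x ^ (s - 2))
        ≤ s * (1 - s) / (2 * (b - a)) *
          ((m - a) ^ 3 * (A + 3 * M) / 12 + (b - m) ^ 3 * (3 * M + Bv) / 12) := by
          apply mul_le_mul_of_nonneg_left _ hc0
          exact add_le_add (I1_bound hs1 ha hma) (I2_bound hs1 hm0 hmb)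
      _ = X * (A + 6 * M + Bv) / 192 := by
          have hba : b - a ≠ 0 := by intro h; rw [sub_eq_zero] at h; exact absurd h (ne_of_gt hab)
          rw [hX, hm]
          field_simp
          ring
  refine le_trans hLHS ?_
  -- RHS bound
  set S : ℝ := (s + 1) ^ (1 / q) with hS
  set D : ℝ := (2 * p + 1) ^ (1 / p) with hD
  have hS0 : 0 < S := Real.rpow_pos_of_pos (by linarith) _
  have hD0 : 0 < D := Real.rpow_pos_of_pos (by linarith) _
  set c1 : ℝ := 2 ^ (1 / q) with hc1
  have hc10 : 0 < c1 := Real.rpow_pos_of_pos (by norm_num) _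
  have hSc : S ≤ c1 := Real.rpow_le_rpow (by linarith) (by linarith) (by positivity)
  have hD3 : D ≤ 3 := D_le_three hp
  have ht : (2:ℝ) ^ (1 / q - 1) = c1 / 2 := by
    rw [hc1, Real.rpow_sub (by norm_num), Real.rpow_one]
  have hbr1 : c1 / 2 * (A + M) ≤ (a ^ ((s - 2) * q) + m ^ ((s - 2) * q)) ^ (1 / q) := by
    rw [Real.rpow_mul (le_of_lt ha), Real.rpow_mul (le_of_lt hm0), ← hA, ← hM, ← ht]
    exact two_point_jensen hA0 hM0 hq
  have hbr2 : c1 / 2 * (M + Bv) ≤ (m ^ ((s - 2) * q) + b ^ ((s - 2) * q)) ^ (1 / q) := by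
    rw [Real.rpow_mul (le_of_lt hm0), Real.rpow_mul (le_of_lt hb), ← hM, ← hBv, ← ht]
    exact two_point_jensen hM0 hB0 hq
  have hM2 : 2 * M ≤ A + Bv := by
    have h := rpow_chord (by linarith : s - 2 ≤ 0) ha hab
      (Set.mem_Icc.2 ⟨le_of_lt hma, le_of_lt hmb⟩)
    rw [← hA, ← hBv, ← hM] at h
    have h2 : (b - m) = (b - a) / 2 := by rw [hm]; ring
    have h3 : (m - a) = (b - a) / 2 := by rw [hm]; ring
    rw [h2, h3] at h
    rw [le_div_iff₀ hba'] at h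
    have h' : (b - a) * M ≤ (b - a) * ((A + Bv) / 2) := by linarith
    have h'' := (mul_le_mul_iff_right₀ hba').mp h'
    linarith
  have hbrnn1 : (0:ℝ) ≤ c1 / 2 * (A + M) := by positivity
  have hbrnn2 : (0:ℝ) ≤ c1 / 2 * (M + Bv) := by positivity
  calc X * (A + 6 * M + Bv) / 192
      ≤ X * (A + 2 * M + Bv) / 96 := by nlinarith
    _ = X / (16 * c1 * 3) * (c1 / 2 * (A + M) + c1 / 2 * (M + Bv)) := by
        field_simp
        ring
    _ ≤ X / (16 * S * D) * (c1 / 2 * (A + M) + c1 / 2 * (M + Bv)) := by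
        apply mul_le_mul_of_nonneg_right _ (by positivity)
        apply div_le_div_of_nonneg_left hX0 (by positivity) ?_
        calc 16 * S * D ≤ 16 * c1 * D := by nlinarith
          _ ≤ 16 * c1 * 3 := by nlinarith
    _ ≤ X / (16 * S * D) * ((a ^ ((s - 2) * q) + m ^ ((s - 2) * q)) ^ (1 / q)
          + (m ^ ((s - 2) * q) + b ^ ((s - 2) * q)) ^ (1 / q)) := by
        apply mul_le_mul_of_nonneg_left (add_le_add hbr1 hbr2) (by positivity)
end
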